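/- If sequences (v_n) and (e_n) of positive reals satisfy v_n = v_{n-1} + e_{n-1} + 1 and e_n = 2e_{n-1} + v_{n-1} for all n ≥ 1 with v_0, e_0 ≥ 1, then e_n/v_n tends to the golden ratio φ = (1+√5)/2 as n → ∞. -/

import Mathlib

open Filter

noncomputable def phi : ℝ := (1 + Real.sqrt 5) / 2

lemma sqrt5_ge : (2:ℝ) ≤ Real.sqrt 5 := by
  nlinarith [Real.sq_sqrt (show (0:ℝ) ≤ 5 by norm_num), Real.sqrt_nonneg 5]

lemma phi_sq : phi ^ 2 = phi + 1 := by
  have h : Real.sqrt 5 ^ 2 = 5 := Real.sq_sqrt (by norm_num)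
  unfold phi; nlinarith [h]

lemma phi_ge : (3/2 : ℝ) ≤ phi := by
  have := sqrt5_ge; unfold phi; linarith

lemma contraction (t : ℝ) (ht : 0 < t) :
    |(1 + 2*t)/(1 + t) - phi| ≤ |t - phi| / 2 := by
  have h1 : (0:ℝ) < 1 + t := by linarith
  have h2 : (0:ℝ) < 1 + phi := by have := phi_ge; linarith
  have heq : (1 + 2*t)/(1 + t) - phi = (t - phi)/((1 + t)*(1 + phi)) := by
    rw [div_sub' (ne_of_gt h1), div_eq_div_iff (ne_of_gt h1) (by positivity)]
    linear_combination (-(1+t)^2) * phi_sq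
  rw [heq, abs_div, abs_of_pos (by positivity : (0:ℝ) < (1+t)*(1+phi))]
  apply div_le_div_of_nonneg_left (abs_nonneg _) (by norm_num)
  have := phi_ge; nlinarith

theorem ratio_tendsto_goldenRatio (v e : ℕ → ℝ)
    (hpos : ∀ n, 0 < v n ∧ 0 < e n)
    (hv0 : 1 ≤ v 0) (he0 : 1 ≤ e 0)
    (hrec : ∀ n, v (n + 1) = v n + e n + 1 ∧ e (n + 1) = 2 * e n + v n) :
    Tendsto (fun n => e n / v n) atTop (nhds phi) := by
  set u : ℕ → ℝ := fun n => v n - 1 with hu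
  set f : ℕ → ℝ := fun n => e n + 1 with hf
  have hurec : ∀ n, u (n+1) = u n + f n := by
    intro n; simp only [hu, hf, (hrec n).1]; ring
  have hfrec : ∀ n, f (n+1) = u n + 2 * f n := by
    intro n; simp only [hu, hf, (hrec n).2]; ring
  have hun : ∀ n, 0 ≤ u n := by
    intro n; induction n with
    | zero => simp only [hu]; linarith
    | succ n ih =>
      rw [hurec]
      have := (hpos n).2
      have : 0 < f n := by simp only [hf]; linarith
      linarith
  have hfn : ∀ n, (2:ℝ)^n ≤ f n := by
    intro n; induction n with
    | zero => simp only [hf, pow_zero]; linarith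
    | succ n ih =>
      rw [hfrec, pow_succ]
      have := hun n; linarith
  have huge : ∀ n, (2:ℝ)^n ≤ u (n+1) := by
    intro n; rw [hurec]; have := hun n; have := hfn n; linarith
  have hupos : ∀ n, 0 < u (n+1) := by
    intro n
    calc (0:ℝ) < 2^n := by positivity
    _ ≤ u (n+1) := huge n
  have hfpos : ∀ n, 0 < f n := by
    intro n
    calc (0:ℝ) < 2^n := by positivity
    _ ≤ f n := hfn n
  set a : ℕ → ℝ := fun n => f (n+1) / u (n+1) with ha
  have hapos : ∀ n, 0 < a n := fun n => div_pos (hfpos _) (hupos _)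
  have hastep : ∀ n, a (n+1) = (1 + 2 * a n) / (1 + a n) := by
    intro n
    have hne : u (n+1) ≠ 0 := ne_of_gt (hupos n)
    simp only [ha]
    rw [hfrec (n+1), hurec (n+1)]
    field_simp
  have hcontr : ∀ n, |a n - phi| ≤ |a 0 - phi| * (1/2)^n := by
    intro n; induction n with
    | zero => simp
    | succ n ih =>
      calc |a (n+1) - phi| = |(1 + 2 * a n)/(1 + a n) - phi| := by rw [hastep n]
      _ ≤ |a n - phi| / 2 := contraction (a n) (hapos n)
      _ ≤ (|a 0 - phi| * (1/2)^n) / 2 := by linarith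
      _ = |a 0 - phi| * (1/2)^(n+1) := by ring
  have habs : Tendsto (fun n => |a n - phi|) atTop (nhds 0) := by
    have hb : Tendsto (fun n : ℕ => |a 0 - phi| * (1/2)^n) atTop (nhds 0) := by
      have := tendsto_pow_atTop_nhds_zero_of_lt_one (by norm_num : (0:ℝ) ≤ 1/2)
        (by norm_num : (1/2:ℝ) < 1)
      simpa using this.const_mul (|a 0 - phi|)
    exact squeeze_zero (fun n => abs_nonneg _) hcontr hb
  have haten : Tendsto a atTop (nhds phi) := by
    rw [tendsto_iff_dist_tendsto_zero]
    simpa [Real.dist_eq] using habs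
  set b : ℕ → ℝ := fun n => 1 / u (n+1) with hb
  have hbten : Tendsto b atTop (nhds 0) := by
    have hle : ∀ n, b n ≤ (1/2)^n := by
      intro n
      have h2 : ((1:ℝ)/2)^n = 1/2^n := by rw [div_pow, one_pow]
      rw [h2]
      exact one_div_le_one_div_of_le (by positivity) (huge n)
    have hge : ∀ n, 0 ≤ b n := fun n => le_of_lt (div_pos one_pos (hupos n))
    exact squeeze_zero hge hle (tendsto_pow_atTop_nhds_zero_of_lt_one (by norm_num) (by norm_num))
  have hmain : Tendsto (fun n => (a n - b n) / (1 + b n)) atTop (nhds phi) := by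
    have := Tendsto.div (haten.sub hbten) (tendsto_const_nhds.add hbten)
      (by norm_num : (1:ℝ) + 0 ≠ 0)
    simp only [sub_zero, add_zero, div_one] at this; exact this
  have heqfun : ∀ n, e (n+1) / v (n+1) = (a n - b n) / (1 + b n) := by
    intro n
    have hne : u (n+1) ≠ 0 := ne_of_gt (hupos n)
    have hv : v (n+1) = u (n+1) + 1 := by simp [hu]
    have he : e (n+1) = f (n+1) - 1 := by simp [hf]
    rw [hv, he]
    simp only [ha, hb]
    field_simp
  have : Tendsto (fun n => e (n+1) / v (n+1)) atTop (nhds phi) := by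
    simpa only [heqfun] using hmain
  exact (tendsto_add_atTop_iff_nat 1).mp this
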